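/- Let d ≥ 2, let p ≡ 1 (mod d) be a prime, and set S_d = {x^d : x ∈ F_p^*}. Let λ ∈ S_d. If there exist A, B ⊆ F_p^* with |A|, |B| ≥ 2 and A·B = (S_d − λ) \ {0}, then |A|·|B| = |S_d| − 1; in particular all products ab with a ∈ A, b ∈ B are distinct. -/

import Mathlib

open Polynomial Finset

namespace CoSidonAux

variable {p : ℕ} [Fact p.Prime]

/-- Coefficient of a power of a linear polynomial. -/
lemma coeff_linear_pow (u v : ZMod p) (n k : ℕ) :
    ((C u + C v * X : (ZMod p)[X]) ^ n).coeff k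
      = (n.choose k : ZMod p) * u ^ (n - k) * v ^ k := by
  have h0 : (C u + C v * X : (ZMod p)[X]) = (C v * X + C u) := by ring
  rw [h0, add_pow, finset_sum_coeff]
  have hterm : ∀ i ∈ Finset.range (n + 1),
      (((C v * X : (ZMod p)[X]) ^ i * (C u) ^ (n - i) * (n.choose i : (ZMod p)[X]))).coeff k
        = if k = i then v ^ i * u ^ (n - i) * (n.choose i : ZMod p) else 0 := by
    intro i _
    have h1 : ((C v * X : (ZMod p)[X]) ^ i * (C u) ^ (n - i) * (n.choose i : (ZMod p)[X]))
        = C (v ^ i * u ^ (n - i) * (n.choose i : ZMod p)) * X ^ i := by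
      rw [mul_pow, ← C_pow, ← C_pow, ← C_eq_natCast]
      simp only [C_mul]
      ring
    rw [h1, coeff_C_mul, coeff_X_pow]
    by_cases h : k = i <;> simp [h]
  rw [Finset.sum_congr rfl hterm, Finset.sum_ite_eq (Finset.range (n + 1)) k
    (fun i => v ^ i * u ^ (n - i) * (n.choose i : ZMod p))]
  by_cases hk : k ≤ n
  · rw [if_pos (Finset.mem_range.mpr (by omega))]
    ring
  · rw [if_neg (by simp [Finset.mem_range]; omega)]
    rw [Nat.choose_eq_zero_of_lt (by omega)]
    simp

/-- Power sums of Lagrange weights. -/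
lemma lagrange_powsum (N : Finset (ZMod p)) (hN : N.Nonempty) {j : ℕ}
    (hj : j ≤ N.card - 1) :
    ∑ a ∈ N, (∏ b ∈ N.erase a, (a - b)⁻¹) * a ^ j
      = if j = N.card - 1 then 1 else 0 := by
  classical
  set r := N.card - 1 with hr
  have hNcard : N.card = r + 1 := by
    have := Finset.card_pos.mpr hN; omega
  set P : (ZMod p)[X] :=
    ∑ a ∈ N, C ((∏ b ∈ N.erase a, (a - b)⁻¹) * a ^ j) *
      (∏ b ∈ N.erase a, (X - C b)) with hP
  have hproddeg : ∀ a ∈ N, (∏ b ∈ N.erase a, (X - C b : (ZMod p)[X])).natDegree = r := by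
    intro a ha
    rw [natDegree_prod _ _ (fun b _ => X_sub_C_ne_zero b)]
    simp only [natDegree_X_sub_C]
    rw [Finset.sum_const, smul_eq_mul, mul_one, Finset.card_erase_of_mem ha]
  have hPdeg : P.natDegree ≤ r := by
    rw [hP]
    refine natDegree_sum_le_of_forall_le _ _ fun a ha => ?_
    refine (natDegree_C_mul_le _ _).trans ?_
    rw [hproddeg a ha]
  have hPeval : ∀ x ∈ N, P.eval x = x ^ j := by
    intro x hx
    rw [hP, eval_finset_sum]
    rw [Finset.sum_eq_single x]
    · rw [eval_mul, eval_C, eval_prod]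
      simp only [eval_sub, eval_X, eval_C]
      have h2 : (∏ b ∈ N.erase x, (x - b)⁻¹) * x ^ j * (∏ b ∈ N.erase x, (x - b))
          = x ^ j * ∏ b ∈ N.erase x, ((x - b)⁻¹ * (x - b)) := by
        rw [Finset.prod_mul_distrib]; ring
      rw [h2]
      have h3 : ∀ b ∈ N.erase x, (x - b)⁻¹ * (x - b) = 1 := by
        intro b hb
        have hbx : b ≠ x := Finset.ne_of_mem_erase hb
        exact inv_mul_cancel₀ (sub_ne_zero.mpr (hbx.symm))
      rw [Finset.prod_congr rfl h3, Finset.prod_const_one, mul_one]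
    · intro a ha hax
      have hxm : x ∈ N.erase a := Finset.mem_erase.mpr ⟨fun h => hax h.symm, hx⟩
      have hx0 : eval x (∏ b ∈ N.erase a, (X - C b : (ZMod p)[X])) = 0 := by
        rw [eval_prod]
        refine Finset.prod_eq_zero hxm ?_
        simp
      rw [eval_mul, hx0, mul_zero]
    · intro h; exact absurd hx h
  have hPX : P = X ^ j := by
    by_contra hne
    have hQ : P - X ^ j ≠ 0 := sub_ne_zero.mpr hne
    have hQdeg : (P - X ^ j).natDegree ≤ r := by
      refine (natDegree_sub_le _ _).trans ?_
      simp only [max_le_iff]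
      exact ⟨hPdeg, by simpa [natDegree_X_pow] using hj⟩
    have hsub : N ⊆ (P - X ^ j).roots.toFinset := by
      intro x hx
      rw [Multiset.mem_toFinset, mem_roots hQ]
      simp [IsRoot, hPeval x hx]
    have h1 := Finset.card_le_card hsub
    have h2 := Multiset.toFinset_card_le (P - X ^ j).roots
    have h3 := (P - X ^ j).card_roots'
    omega
  have hL : P.coeff r = ∑ a ∈ N, (∏ b ∈ N.erase a, (a - b)⁻¹) * a ^ j := by
    rw [hP, finset_sum_coeff]
    refine Finset.sum_congr rfl fun a ha => ?_
    rw [coeff_C_mul]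
    have hmon : (∏ b ∈ N.erase a, (X - C b : (ZMod p)[X])).Monic :=
      monic_prod_of_monic _ _ fun b _ => monic_X_sub_C b
    have : (∏ b ∈ N.erase a, (X - C b : (ZMod p)[X])).coeff r = 1 := by
      conv_lhs => rw [← hproddeg a ha]
      exact hmon.coeff_natDegree
    rw [this, mul_one]
  calc ∑ a ∈ N, (∏ b ∈ N.erase a, (a - b)⁻¹) * a ^ j = P.coeff r := hL.symm
    _ = (X ^ j : (ZMod p)[X]).coeff r := by rw [hPX]
    _ = if j = r then 1 else 0 := by rw [coeff_X_pow]; simp [eq_comm]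

/-- The Stepanov/Hanson–Petridis bound. -/
lemma stepanov (m : ℕ) (hm : 1 ≤ m) (lam : ZMod p) (hlam0 : lam ≠ 0)
    (hlam : lam ^ m = 1) (A B : Finset (ZMod p)) (hA0 : (0 : ZMod p) ∉ A)
    (hB0 : (0 : ZMod p) ∉ B) (hA1 : A.Nonempty) (hsize : m + A.card ≤ p)
    (hpow : ∀ a ∈ A, ∀ b ∈ B, (lam + a * b) ^ m = 1) :
    A.card * B.card ≤ m - 1 := by
  classical
  set r := A.card with hr
  have hr1 : 1 ≤ r := Finset.card_pos.mpr hA1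
  set N : Finset (ZMod p) := insert 0 A with hN
  have hNcard : N.card = r + 1 := by
    rw [hN, Finset.card_insert_of_notMem hA0]
  set c : ZMod p → ZMod p := fun a => ∏ b ∈ N.erase a, (a - b)⁻¹ with hc
  have hSpow : ∀ j ≤ r, ∑ a ∈ N, c a * a ^ j = if j = r then 1 else 0 := by
    intro j hj
    have hN1 : N.Nonempty := ⟨0, by rw [hN]; exact Finset.mem_insert_self 0 A⟩
    have := lagrange_powsum N hN1 (j := j) (by omega)
    rw [hNcard, Nat.add_sub_cancel] at this
    rw [hc]
    exact this
  set Nexp := m + r - 1 with hNexp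
  have hrNexp : r ≤ Nexp := by omega
  have hNexpP : Nexp < p := by omega
  set F : (ZMod p)[X] := ∑ a ∈ N, C (c a) * (C lam + C a * X) ^ Nexp with hF
  have hcoeffF : ∀ t, F.coeff t
      = (Nexp.choose t : ZMod p) * lam ^ (Nexp - t) * ∑ a ∈ N, c a * a ^ t := by
    intro t
    calc F.coeff t = ∑ a ∈ N, c a * ((Nexp.choose t : ZMod p) * lam ^ (Nexp - t) * a ^ t) := by
          rw [hF, finset_sum_coeff]
          exact Finset.sum_congr rfl fun a _ => by rw [coeff_C_mul, coeff_linear_pow]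
      _ = (Nexp.choose t : ZMod p) * lam ^ (Nexp - t) * ∑ a ∈ N, c a * a ^ t := by
          rw [Finset.mul_sum]
          exact Finset.sum_congr rfl fun a _ => by ring
  have hchoose : ∀ t, t ≤ Nexp → (Nexp.choose t : ZMod p) ≠ 0 := by
    intro t ht hcast
    rw [ZMod.natCast_eq_zero_iff] at hcast
    have h1 : Nexp.choose t * t.factorial * (Nexp - t).factorial = Nexp.factorial :=
      Nat.choose_mul_factorial_mul_factorial ht
    have hdvd : p ∣ Nexp.factorial := by
      rw [← h1]
      exact (hcast.mul_right _).mul_right _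
    have := (Nat.Prime.dvd_factorial (Fact.out : p.Prime)).mp hdvd
    omega
  have hFne : F ≠ 0 := by
    intro h0
    have hco := hcoeffF r
    rw [h0, Polynomial.coeff_zero, hSpow r le_rfl, if_pos rfl, mul_one] at hco
    exact (mul_ne_zero (hchoose r hrNexp) (pow_ne_zero _ hlam0)) hco.symm
  have hdegF : F.natDegree ≤ Nexp := by
    rw [hF]
    refine natDegree_sum_le_of_forall_le _ _ fun a _ => ?_
    refine (natDegree_C_mul_le _ _).trans ?_
    refine natDegree_pow_le.trans ?_
    have h1 : (C lam + C a * X : (ZMod p)[X]).natDegree ≤ 1 := by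
      refine (natDegree_add_le _ _).trans ?_
      simp only [natDegree_C, max_le_iff]
      refine ⟨Nat.zero_le _, ?_⟩
      exact (natDegree_C_mul_le _ _).trans (by simp [natDegree_X])
    calc Nexp * (C lam + C a * X : (ZMod p)[X]).natDegree ≤ Nexp * 1 :=
          Nat.mul_le_mul_left _ h1
      _ = Nexp := mul_one _
  have hdvd : ∀ x ∈ insert (0 : ZMod p) B, (X - C x) ^ r ∣ F := by
    intro b hb
    have hpowN : ∀ a ∈ N, (lam + a * b) ^ m = 1 := by
      intro a ha
      rcases Finset.mem_insert.mp ha with h | h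
      · simp [h, hlam]
      · rcases Finset.mem_insert.mp hb with hb' | hb'
        · simp [hb', hlam]
        · exact hpow a h b hb'
    have hFb : F = ∑ i ∈ Finset.range (Nexp + 1), (X - C b) ^ i *
        C ((Nexp.choose i : ZMod p) * ∑ a ∈ N, c a * a ^ i * (lam + a * b) ^ (Nexp - i)) := by
      rw [hF]
      have hsplit : ∀ a ∈ N, C (c a) * (C lam + C a * X : (ZMod p)[X]) ^ Nexp
          = ∑ i ∈ Finset.range (Nexp + 1), (X - C b) ^ i *
              C ((Nexp.choose i : ZMod p) * (c a * a ^ i * (lam + a * b) ^ (Nexp - i))) := by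
        intro a _
        have h1 : (C lam + C a * X : (ZMod p)[X])
            = C a * (X - C b) + C (lam + a * b) := by
          simp only [C_add, C_mul]
          ring
        rw [h1, add_pow, Finset.mul_sum]
        refine Finset.sum_congr rfl fun i _ => ?_
        rw [mul_pow, ← C_pow, ← C_pow, ← C_eq_natCast]
        simp only [C_mul]
        ring
      rw [Finset.sum_congr rfl hsplit, Finset.sum_comm]
      refine Finset.sum_congr rfl fun i _ => ?_
      rw [← Finset.mul_sum]
      congr 1
      rw [← map_sum, Finset.mul_sum]
    rw [hFb]
    refine Finset.dvd_sum fun i _ => ?_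
    by_cases hir : r ≤ i
    · exact Dvd.dvd.mul_right (pow_dvd_pow _ hir) _
    · push_neg at hir
      have hzero : ∑ a ∈ N, c a * a ^ i * (lam + a * b) ^ (Nexp - i) = 0 := by
        have hNi : Nexp - i = m + (r - 1 - i) := by omega
        have hred : ∀ a ∈ N, c a * a ^ i * (lam + a * b) ^ (Nexp - i)
            = c a * a ^ i * (lam + a * b) ^ (r - 1 - i) := by
          intro a ha
          rw [hNi, pow_add, hpowN a ha, one_mul]
        rw [Finset.sum_congr rfl hred]
        set s0 := r - 1 - i with hs0
        have hexp : ∀ a ∈ N, c a * a ^ i * (lam + a * b) ^ s0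
            = ∑ sj ∈ Finset.range (s0 + 1),
                (lam ^ sj * b ^ (s0 - sj) * ((s0.choose sj : ZMod p))) * (c a * a ^ (i + (s0 - sj))) := by
          intro a _
          rw [add_pow, Finset.mul_sum]
          refine Finset.sum_congr rfl fun sj _ => ?_
          rw [mul_pow, pow_add]
          ring
        rw [Finset.sum_congr rfl hexp, Finset.sum_comm]
        refine Finset.sum_eq_zero fun sj hsj => ?_
        rw [← Finset.mul_sum]
        have he : i + (s0 - sj) ≤ r := by omega
        rw [hSpow _ he, if_neg (by omega), mul_zero]
      rw [hzero, mul_zero, C_0, mul_zero]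
      exact dvd_zero _
  have hprod : (∏ x ∈ insert (0 : ZMod p) B, (X - C x) ^ r) ∣ F := by
    refine Finset.prod_dvd_of_coprime ?_ fun x hx => hdvd x hx
    intro x _ y _ hxy
    have : IsCoprime (X - C x : (ZMod p)[X]) (X - C y) :=
      isCoprime_X_sub_C_of_isUnit_sub ((sub_ne_zero.mpr hxy).isUnit)
    exact (this.pow : IsCoprime ((X - C x) ^ r) ((X - C y) ^ r))
  have hdegprod : (B.card + 1) * r ≤ Nexp := by
    have h0 : (∏ x ∈ insert (0 : ZMod p) B, (X - C x : (ZMod p)[X]) ^ r).natDegree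
        = (B.card + 1) * r := by
      rw [natDegree_prod _ _ (fun x _ => pow_ne_zero _ (X_sub_C_ne_zero x))]
      have : ∀ x ∈ insert (0 : ZMod p) B, ((X - C x : (ZMod p)[X]) ^ r).natDegree = r := by
        intro x _
        rw [natDegree_pow, natDegree_X_sub_C, mul_one]
      rw [Finset.sum_congr rfl this, Finset.sum_const, smul_eq_mul,
        Finset.card_insert_of_notMem hB0]
    calc (B.card + 1) * r = _ := h0.symm
      _ ≤ F.natDegree := natDegree_le_of_dvd hprod hFne
      _ ≤ Nexp := hdegF
  have hlin : (B.card + 1) * r = r * B.card + r := by ring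
  omega

/-- The number of `n`-th roots of unity in `ZMod p` is `n`, when `n ∣ p - 1`. -/
lemma card_pow_eq_one (n : ℕ) (hn : 0 < n) (hdvd : n ∣ p - 1) :
    (Finset.univ.filter (fun x : ZMod p => x ^ n = 1)).card = n := by
  classical
  have hp : 1 < p := (Fact.out : p.Prime).one_lt
  obtain ⟨e, he⟩ := hdvd
  set f : (ZMod p)[X] := X ^ n - 1 with hf
  set F : (ZMod p)[X] := X ^ (p - 1) - 1 with hFdef
  have hfd : f ∣ F := by
    have h1 := sub_dvd_pow_sub_pow ((X : (ZMod p)[X]) ^ n) 1 e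
    rw [← pow_mul, one_pow, ← he] at h1
    exact h1
  have hfne : f ≠ 0 := by
    intro h
    have : f.natDegree = n := by rw [hf]; rw [← C_1]; exact natDegree_X_pow_sub_C
    rw [h] at this
    simp at this
    omega
  have hFne : F ≠ 0 := by
    intro h
    have : F.natDegree = p - 1 := by rw [hFdef, ← C_1]; exact natDegree_X_pow_sub_C
    rw [h] at this
    simp at this
    omega
  have hkey : F * X = X ^ p - X := by
    have h1 : p - 1 + 1 = p := by omega
    rw [hFdef, sub_mul, ← pow_succ, h1, one_mul]
  have hrootsXp : ((X : (ZMod p)[X]) ^ p - X).roots = Finset.univ.val := by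
    have := FiniteField.roots_X_pow_card_sub_X (ZMod p)
    rwa [ZMod.card] at this
  have hFXne : F * X ≠ 0 := by
    rw [hkey]
    have hdeg := FiniteField.X_pow_card_sub_X_natDegree_eq (ZMod p) hp
    intro h
    rw [h] at hdeg
    simp at hdeg
    omega
  have hrootsF : F.roots + (X : (ZMod p)[X]).roots = Finset.univ.val := by
    rw [← roots_mul hFXne, hkey, hrootsXp]
  have hnodupF : F.roots.Nodup := by
    have : F.roots ≤ Finset.univ.val := by
      rw [← hrootsF]; exact Multiset.le_add_right _ _
    exact Multiset.nodup_of_le this Finset.univ.nodup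
  have hcardF : Multiset.card F.roots = p - 1 := by
    have h1 : Multiset.card (F.roots + (X : (ZMod p)[X]).roots) = p := by
      rw [hrootsF]
      simp [ZMod.card p]
    have h2 : Multiset.card (X : (ZMod p)[X]).roots = 1 := by rw [roots_X]; rfl
    rw [Multiset.card_add] at h1
    omega
  obtain ⟨g, hg⟩ := hfd
  have hgne : g ≠ 0 := by
    intro h
    rw [h, mul_zero] at hg
    exact hFne hg
  have hfdeg : f.natDegree = n := by rw [hf, ← C_1]; exact natDegree_X_pow_sub_C
  have hFdeg : F.natDegree = p - 1 := by rw [hFdef, ← C_1]; exact natDegree_X_pow_sub_C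
  have hgdeg : f.natDegree + g.natDegree = p - 1 := by
    rw [← natDegree_mul hfne hgne, ← hg, hFdeg]
  have hrootsmul : F.roots = f.roots + g.roots := by rw [hg]; exact roots_mul (hg ▸ hFne)
  have hcardf : Multiset.card f.roots = n := by
    have h1 := f.card_roots'
    have h2 := g.card_roots'
    have h3 : Multiset.card f.roots + Multiset.card g.roots = p - 1 := by
      rw [← Multiset.card_add, ← hrootsmul, hcardF]
    omega
  have hnodupf : f.roots.Nodup := by
    refine Multiset.nodup_of_le ?_ hnodupF
    rw [hrootsmul]
    exact Multiset.le_add_right _ _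
  have hset : Finset.univ.filter (fun x : ZMod p => x ^ n = 1) = f.roots.toFinset := by
    ext x
    simp only [Finset.mem_filter, Finset.mem_univ, true_and, Multiset.mem_toFinset,
      mem_roots hfne, IsRoot.def, hf, eval_sub, eval_pow, eval_X, eval_one, sub_eq_zero]
    rw [mem_roots (by rw [← hf]; exact hfne), IsRoot.def, eval_sub, eval_pow, eval_X, eval_one,
      sub_eq_zero]
  rw [hset, Multiset.toFinset_card_of_nodup hnodupf, hcardf]

/-- Cardinality of the set of `d`-th powers. -/
lemma card_S_mul (d : ℕ) (hd2 : 2 ≤ d) (hp : p % d = 1) :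
    (Finset.univ.filter (fun y : ZMod p => ∃ x : ZMod p, x ≠ 0 ∧ x ^ d = y)).card * d = p - 1 := by
  classical
  have hpp : p.Prime := Fact.out
  have hp1 : 1 < p := hpp.one_lt
  have hdp : d ∣ p - 1 := by
    have h := Nat.div_add_mod p d
    exact ⟨p / d, by omega⟩
  have hd0 : 0 < d := by omega
  set S : Finset (ZMod p) :=
    Finset.univ.filter (fun y : ZMod p => ∃ x : ZMod p, x ≠ 0 ∧ x ^ d = y) with hS
  set U : Finset (ZMod p) := Finset.univ.filter (fun x : ZMod p => x ≠ 0) with hU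
  have hUcard : U.card = p - 1 := by
    rw [hU, Finset.filter_ne', Finset.card_erase_of_mem (Finset.mem_univ _)]
    simp [ZMod.card]
  have hmap : ∀ x ∈ U, x ^ d ∈ S := by
    intro x hx
    rw [hU, Finset.mem_filter] at hx
    rw [hS, Finset.mem_filter]
    exact ⟨Finset.mem_univ _, x, hx.2, rfl⟩
  have hfib := Finset.card_eq_sum_card_fiberwise hmap
  have hfibcard : ∀ y ∈ S, (U.filter (fun x => x ^ d = y)).card = d := by
    intro y hy
    rw [hS, Finset.mem_filter] at hy
    obtain ⟨-, x₀, hx₀, hx₀d⟩ := hy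
    have hyne : y ≠ 0 := by rw [← hx₀d]; exact pow_ne_zero _ hx₀
    have hbij : (Finset.univ.filter (fun x : ZMod p => x ^ d = 1)).card
        = (U.filter (fun x => x ^ d = y)).card := by
      refine Finset.card_bij (fun t _ => x₀ * t) ?_ ?_ ?_
      · intro t ht
        rw [Finset.mem_filter] at ht
        have ht1 : t ^ d = 1 := ht.2
        have htne : t ≠ 0 := by
          intro h
          rw [h, zero_pow (by omega)] at ht1
          exact zero_ne_one ht1
        rw [Finset.mem_filter, hU, Finset.mem_filter]
        exact ⟨⟨Finset.mem_univ _, mul_ne_zero hx₀ htne⟩, by rw [mul_pow, ht1, mul_one, hx₀d]⟩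
      · intro t1 _ t2 _ heq
        exact mul_left_cancel₀ hx₀ heq
      · intro x hx
        rw [Finset.mem_filter, hU, Finset.mem_filter] at hx
        obtain ⟨⟨-, hxne⟩, hxd⟩ := hx
        refine ⟨x₀⁻¹ * x, ?_, ?_⟩
        · rw [Finset.mem_filter]
          refine ⟨Finset.mem_univ _, ?_⟩
          rw [mul_pow, inv_pow, hx₀d, hxd]
          exact inv_mul_cancel₀ hyne
        · exact mul_inv_cancel_left₀ hx₀ x
    rw [← hbij]
    exact card_pow_eq_one (p := p) d hd0 hdp
  rw [hfib, Finset.sum_congr rfl hfibcard, Finset.sum_const, smul_eq_mul] at hUcard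
  rw [← hUcard]

end CoSidonAux

/-- multiplicative decompositions of shifted d-th powers are co-Sidon. -/
theorem multiplicative_decomposition_coSidon
    (d : ℕ) (hd : 2 ≤ d) (p : ℕ) [Fact p.Prime] (hp : p % d = 1)
    (lam : ZMod p) (hlam : ∃ x : ZMod p, x ≠ 0 ∧ x ^ d = lam)
    (A B : Finset (ZMod p)) (hA0 : (0 : ZMod p) ∉ A) (hB0 : (0 : ZMod p) ∉ B)
    (hA2 : 2 ≤ A.card) (hB2 : 2 ≤ B.card)
    (hAB : Finset.image₂ (· * ·) A B =
      ((Finset.univ.filter (fun y : ZMod p => ∃ x : ZMod p, x ≠ 0 ∧ x ^ d = y)).image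
        (fun s => s - lam)).erase 0) :
    A.card * B.card =
      (Finset.univ.filter (fun y : ZMod p => ∃ x : ZMod p, x ≠ 0 ∧ x ^ d = y)).card - 1 ∧
    ∀ a ∈ A, ∀ b ∈ B, ∀ a' ∈ A, ∀ b' ∈ B, a * b = a' * b' → a = a' ∧ b = b' := by
  classical
  set S : Finset (ZMod p) :=
    Finset.univ.filter (fun y : ZMod p => ∃ x : ZMod p, x ≠ 0 ∧ x ^ d = y) with hSdef
  set m := S.card with hm
  have hpp : p.Prime := Fact.out
  have hp1 : 1 < p := hpp.one_lt
  have hmd : m * d = p - 1 := CoSidonAux.card_S_mul d hd hp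
  have hm1 : 1 ≤ m := by
    rcases Nat.eq_zero_or_pos m with h | h
    · rw [h, zero_mul] at hmd; omega
    · exact h
  obtain ⟨x₀, hx₀, hx₀d⟩ := hlam
  have hlamS : lam ∈ S := by
    rw [hSdef, Finset.mem_filter]
    exact ⟨Finset.mem_univ _, x₀, hx₀, hx₀d⟩
  have hlam0 : lam ≠ 0 := by
    rw [← hx₀d]
    exact pow_ne_zero _ hx₀
  have hSm : ∀ y ∈ S, y ^ m = 1 := by
    intro y hy
    rw [hSdef, Finset.mem_filter] at hy
    obtain ⟨-, x, hxne, hxd⟩ := hy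
    rw [← hxd, ← pow_mul, mul_comm d m, hmd]
    exact ZMod.pow_card_sub_one_eq_one hxne
  have hlampow : lam ^ m = 1 := hSm lam hlamS
  set T : Finset (ZMod p) := (S.image (fun s => s - lam)).erase 0 with hT
  have hTcard : T.card = m - 1 := by
    rw [hT, Finset.card_erase_of_mem, Finset.card_image_of_injective _ (sub_left_injective)]
    rw [Finset.mem_image]
    exact ⟨lam, hlamS, sub_self lam⟩
  have himT : ∀ a ∈ A, ∀ b ∈ B, a * b ∈ T := by
    intro a ha b hb
    rw [← hAB]
    exact Finset.mem_image₂_of_mem ha hb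
  have hpow : ∀ a ∈ A, ∀ b ∈ B, (lam + a * b) ^ m = 1 := by
    intro a ha b hb
    have h1 := himT a ha b hb
    rw [hT, Finset.mem_erase, Finset.mem_image] at h1
    obtain ⟨-, s, hs, hsub⟩ := h1
    have : lam + a * b = s := by rw [← hsub]; ring
    rw [this]
    exact hSm s hs
  obtain ⟨b₀, hb₀⟩ : B.Nonempty := Finset.card_pos.mp (by omega)
  have hb₀ne : b₀ ≠ 0 := fun h => hB0 (h ▸ hb₀)
  have hAcard : A.card ≤ m - 1 := by
    have hinj : Set.InjOn (fun a => a * b₀) A := fun a _ a' _ h =>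
      mul_left_injective₀ hb₀ne h
    have hsub : A.image (fun a => a * b₀) ⊆ T := by
      intro y hy
      rw [Finset.mem_image] at hy
      obtain ⟨a, ha, rfl⟩ := hy
      exact himT a ha b₀ hb₀
    calc A.card = (A.image (fun a => a * b₀)).card := (Finset.card_image_of_injOn hinj).symm
      _ ≤ T.card := Finset.card_le_card hsub
      _ = m - 1 := hTcard
  have hupper : A.card * B.card ≤ m - 1 := by
    refine CoSidonAux.stepanov m hm1 lam hlam0 hlampow A B hA0 hB0
      (Finset.card_pos.mp (by omega)) ?_ hpow
    have h2m : 2 * m ≤ p - 1 := by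
      calc 2 * m = m * 2 := by ring
        _ ≤ m * d := Nat.mul_le_mul_left _ hd
        _ = p - 1 := hmd
    omega
  have hlower : m - 1 ≤ A.card * B.card := by
    calc m - 1 = T.card := hTcard.symm
      _ = (Finset.image₂ (· * ·) A B).card := by rw [← hAB]
      _ ≤ A.card * B.card := Finset.card_image₂_le _ _ _
  have heq : A.card * B.card = m - 1 := le_antisymm hupper hlower
  refine ⟨heq, ?_⟩
  have hcardim : (Finset.image₂ (· * ·) A B).card = A.card * B.card := by
    rw [hAB, hTcard, heq]
  have hinj := Finset.card_image₂_iff.mp hcardim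
  intro a ha b hb a' ha' b' hb' habe
  have h1 : ((a, b) : ZMod p × ZMod p) ∈ (A ×ˢ B : Set (ZMod p × ZMod p)) := by
    exact Set.mk_mem_prod ha hb
  have h2 : ((a', b') : ZMod p × ZMod p) ∈ (A ×ˢ B : Set (ZMod p × ZMod p)) := by
    exact Set.mk_mem_prod ha' hb'
  have := hinj h1 h2 habe
  exact ⟨congrArg Prod.fst this, congrArg Prod.snd this⟩
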